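/- Every strictly convex absolute normalized norm N on ℝ² has property (α): for every c, d ≥ 0 with N(c,d) = 1 there exist ε > 0 and a neighbourhood W of (c,d) such that any a, b ≥ 0 with N(a,b) = 1 and N((a,b)+(c,d)) ≥ 2 − ε lies in W, and either sup_{(a,b)∈W} a < 1 or sup_{(a,b)∈W} b < 1. -/
import Mathlib

open Set

private lemma coord_le_N {N : ℝ × ℝ → ℝ}
    (Ntri : ∀ u v : ℝ × ℝ, N (u + v) ≤ N u + N v)
    (Nhom : ∀ (t : ℝ) (u : ℝ × ℝ), N (t • u) = |t| * N u)
    (Nabs : ∀ s t : ℝ, N (s, t) = N (|s|, |t|))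
    (Nnorm₁ : N (1, 0) = 1) (Nnorm₂ : N (0, 1) = 1) (a b : ℝ) :
    |a| ≤ N (a, b) ∧ |b| ≤ N (a, b) := by
  have hab : N (a, -b) = N (a, b) := by rw [Nabs a (-b), abs_neg, ← Nabs]
  have hab' : N (-a, b) = N (a, b) := by rw [Nabs (-a) b, abs_neg, ← Nabs]
  constructor
  · have h1 : ((2*a : ℝ), (0:ℝ)) = (a, b) + (a, -b) := by
      simp [Prod.ext_iff]; ring
    have h2 : N ((2*a : ℝ), (0:ℝ)) = |2*a| := by
      have : ((2*a : ℝ), (0:ℝ)) = (2*a) • ((1:ℝ), (0:ℝ)) := by simp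
      rw [this, Nhom, Nnorm₁, mul_one]
    have h3 := Ntri (a, b) (a, -b)
    rw [← h1, h2, hab] at h3
    have : |2*a| = 2 * |a| := by rw [abs_mul]; norm_num
    linarith [this ▸ h3]
  · have h1 : ((0:ℝ), (2*b : ℝ)) = (a, b) + (-a, b) := by
      simp [Prod.ext_iff]; ring
    have h2 : N ((0:ℝ), (2*b : ℝ)) = |2*b| := by
      have : ((0:ℝ), (2*b : ℝ)) = (2*b) • ((0:ℝ), (1:ℝ)) := by simp
      rw [this, Nhom, Nnorm₂, mul_one]
    have h3 := Ntri (a, b) (-a, b)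
    rw [← h1, h2, hab'] at h3
    have : |2*b| = 2 * |b| := by rw [abs_mul]; norm_num
    linarith [this ▸ h3]

private lemma N_cont {N : ℝ × ℝ → ℝ}
    (Ntri : ∀ u v : ℝ × ℝ, N (u + v) ≤ N u + N v)
    (Nhom : ∀ (t : ℝ) (u : ℝ × ℝ), N (t • u) = |t| * N u)
    (Nnorm₁ : N (1, 0) = 1) (Nnorm₂ : N (0, 1) = 1) :
    Continuous N := by
  have hle : ∀ w : ℝ × ℝ, N w ≤ |w.1| + |w.2| := by
    intro w
    have h1 : w = w.1 • ((1:ℝ), (0:ℝ)) + w.2 • ((0:ℝ), (1:ℝ)) := by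
      simp [Prod.ext_iff]
    have h2 := Ntri (w.1 • ((1:ℝ), (0:ℝ))) (w.2 • ((0:ℝ), (1:ℝ)))
    rw [← h1, Nhom, Nhom, Nnorm₁, Nnorm₂, mul_one, mul_one] at h2
    exact h2
  have hneg : ∀ w : ℝ × ℝ, N (-w) = N w := by
    intro w
    have := Nhom (-1) w
    simpa using this
  have hdiff : ∀ u v : ℝ × ℝ, N u - N v ≤ N (u - v) := by
    intro u v
    have := Ntri v (u - v)
    simp at this
    linarith
  apply LipschitzWith.continuous (K := 2) (f := N)
  apply LipschitzWith.of_dist_le_mul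
  intro u v
  have h1 : |N u - N v| ≤ N (u - v) := by
    apply abs_sub_le_iff.mpr
    refine ⟨hdiff u v, ?_⟩
    have := hdiff v u
    rwa [← neg_sub u v, hneg] at this
  have h2 : N (u - v) ≤ |(u-v).1| + |(u-v).2| := hle _
  have h3 : |(u-v).1| ≤ dist u v := by
    rw [Prod.dist_eq]
    have : |(u-v).1| = dist u.1 v.1 := by rw [Real.dist_eq]; rfl
    rw [this]; exact le_max_left _ _
  have h4 : |(u-v).2| ≤ dist u v := by
    rw [Prod.dist_eq]
    have : |(u-v).2| = dist u.2 v.2 := by rw [Real.dist_eq]; rfl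
    rw [this]; exact le_max_right _ _
  rw [Real.dist_eq]
  push_cast
  linarith

private lemma key (N : ℝ × ℝ → ℝ)
    (Ntri : ∀ u v : ℝ × ℝ, N (u + v) ≤ N u + N v)
    (Nhom : ∀ (t : ℝ) (u : ℝ × ℝ), N (t • u) = |t| * N u)
    (Nabs : ∀ s t : ℝ, N (s, t) = N (|s|, |t|))
    (Nnorm₁ : N (1, 0) = 1) (Nnorm₂ : N (0, 1) = 1)
    (Nsc : ∀ u v : ℝ × ℝ, N u = 1 → N v = 1 → u ≠ v → N ((1 / 2 : ℝ) • (u + v)) < 1)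
    (c d : ℝ) (hc : 0 ≤ c) (hd0 : 0 ≤ d) (hd : d < 1) (hN : N (c, d) = 1) :
    ∃ ε > (0 : ℝ), ∃ W : Set (ℝ × ℝ), W ∈ nhds (c, d) ∧
      (∀ a b : ℝ, 0 ≤ a → 0 ≤ b → N (a, b) = 1 →
        2 - ε ≤ N ((a, b) + (c, d)) → (a, b) ∈ W) ∧
      ∃ s < (1 : ℝ), ∀ p ∈ W, p.2 ≤ s := by
  have hcont : Continuous N := N_cont Ntri Nhom Nnorm₁ Nnorm₂
  set s : ℝ := (d + 1) / 2 with hs_def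
  have hds : d < s := by simp only [hs_def]; linarith
  have hs1 : s < 1 := by simp only [hs_def]; linarith
  set W : Set (ℝ × ℝ) := {p | p.2 < s} with hW_def
  have hWopen : IsOpen W := isOpen_lt continuous_snd continuous_const
  have hWmem : W ∈ nhds (c, d) := hWopen.mem_nhds (by simpa [hW_def] using hds)
  have hWbound : ∃ t < (1 : ℝ), ∀ p ∈ W, p.2 ≤ t := ⟨s, hs1, fun p hp => le_of_lt hp⟩
  set K : Set (ℝ × ℝ) := {p | 0 ≤ p.1 ∧ 0 ≤ p.2 ∧ N p = 1 ∧ s ≤ p.2} with hK_def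
  have hKclosed : IsClosed K := by
    have h1 : IsClosed {p : ℝ × ℝ | 0 ≤ p.1} := isClosed_le continuous_const continuous_fst
    have h2 : IsClosed {p : ℝ × ℝ | 0 ≤ p.2} := isClosed_le continuous_const continuous_snd
    have h3 : IsClosed {p : ℝ × ℝ | N p = 1} := isClosed_eq hcont continuous_const
    have h4 : IsClosed {p : ℝ × ℝ | s ≤ p.2} := isClosed_le continuous_const continuous_snd
    exact h1.inter (h2.inter (h3.inter h4))
  have hKcompact : IsCompact K := by
    apply IsCompact.of_isClosed_subset (isCompact_Icc (a := ((0:ℝ),(0:ℝ))) (b := ((1:ℝ),(1:ℝ)))) hKclosed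
    rintro ⟨a, b⟩ ⟨ha, hb, hab, -⟩
    obtain ⟨h1, h2⟩ := coord_le_N Ntri Nhom Nabs Nnorm₁ Nnorm₂ a b
    rw [hab] at h1 h2
    constructor
    · exact ⟨ha, hb⟩
    · exact ⟨le_trans (le_abs_self a) h1, le_trans (le_abs_self b) h2⟩
  have hfc : ContinuousOn (fun p : ℝ × ℝ => N (p + (c, d))) K :=
    (hcont.comp (continuous_id.add continuous_const)).continuousOn
  have hlt2 : ∀ p ∈ K, N (p + (c, d)) < 2 := by
    rintro ⟨a, b⟩ ⟨ha, hb, hab, hbs⟩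
    have hne : ((a, b) : ℝ × ℝ) ≠ (c, d) := by
      intro h
      rw [Prod.ext_iff] at h
      simp at h
      linarith [h.2 ▸ hds]
    have h1 := Nsc (a, b) (c, d) hab hN hne
    have h2 := Nhom (1/2) ((a, b) + (c, d))
    rw [h2] at h1
    rw [show |(1/2 : ℝ)| = 1/2 by norm_num] at h1
    linarith
  by_cases hK : K.Nonempty
  · obtain ⟨p₀, hp₀, hmax⟩ := hKcompact.exists_isMaxOn hK hfc
    set M := N (p₀ + (c, d)) with hM_def
    have hM2 : M < 2 := hlt2 p₀ hp₀
    refine ⟨(2 - M) / 2, by linarith, W, hWmem, ?_, hWbound⟩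
    intro a b ha hb hab hsum
    by_contra hniW
    have hbs : s ≤ b := by
      simp only [hW_def, mem_setOf_eq, not_lt] at hniW
      exact hniW
    have hKmem : ((a, b) : ℝ × ℝ) ∈ K := ⟨ha, hb, hab, hbs⟩
    have := hmax hKmem
    simp only [mem_upperBounds, mem_setOf_eq] at this
    have hle : N ((a, b) + (c, d)) ≤ M := this
    linarith
  · refine ⟨1, one_pos, W, hWmem, ?_, hWbound⟩
    intro a b ha hb hab hsum
    by_contra hniW
    have hbs : s ≤ b := by
      simp only [hW_def, mem_setOf_eq, not_lt] at hniW
      exact hniW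
    exact hK ⟨(a, b), ha, hb, hab, hbs⟩

theorem stmt_15 (N : ℝ × ℝ → ℝ)
    -- `N` is a norm on `ℝ²`:
    (Ntri : ∀ u v : ℝ × ℝ, N (u + v) ≤ N u + N v)
    (Nhom : ∀ (t : ℝ) (u : ℝ × ℝ), N (t • u) = |t| * N u)
    (Ndef : ∀ u : ℝ × ℝ, N u = 0 → u = 0)
    -- `N` is absolute and normalized:
    (Nabs : ∀ s t : ℝ, N (s, t) = N (|s|, |t|))
    (Nnorm₁ : N (1, 0) = 1) (Nnorm₂ : N (0, 1) = 1)
    -- `N` is strictly convex: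
    (Nsc : ∀ u v : ℝ × ℝ, N u = 1 → N v = 1 → u ≠ v → N ((1 / 2 : ℝ) • (u + v)) < 1) :
    ∀ c d : ℝ, 0 ≤ c → 0 ≤ d → N (c, d) = 1 →
      ∃ ε > (0 : ℝ), ∃ W : Set (ℝ × ℝ), W ∈ nhds (c, d) ∧
        (∀ a b : ℝ, 0 ≤ a → 0 ≤ b → N (a, b) = 1 →
          2 - ε ≤ N ((a, b) + (c, d)) → (a, b) ∈ W) ∧
        ((∃ s < (1 : ℝ), ∀ p ∈ W, p.1 ≤ s) ∨ (∃ s < (1 : ℝ), ∀ p ∈ W, p.2 ≤ s)) := by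
  intro c d hc hd hN
  -- at least one coordinate is < 1
  have hcd : c < 1 ∨ d < 1 := by
    by_contra h
    push_neg at h
    obtain ⟨hc1, hd1⟩ := h
    obtain ⟨h1, h2⟩ := coord_le_N Ntri Nhom Nabs Nnorm₁ Nnorm₂ c d
    rw [hN] at h1 h2
    have hc1' : c = 1 := le_antisymm (le_trans (le_abs_self c) h1) hc1
    have hd1' : d = 1 := le_antisymm (le_trans (le_abs_self d) h2) hd1
    subst hc1'; subst hd1'
    have hne : ((1, 0) : ℝ × ℝ) ≠ (1, 1) := by simp [Prod.ext_iff]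
    have h3 := Nsc (1, 0) (1, 1) Nnorm₁ hN hne
    have h4 : ((1/2 : ℝ) • (((1:ℝ), (0:ℝ)) + ((1:ℝ), (1:ℝ)))) = ((1:ℝ), (1/2:ℝ)) := by
      simp [Prod.ext_iff]; norm_num
    rw [h4] at h3
    obtain ⟨h5, -⟩ := coord_le_N Ntri Nhom Nabs Nnorm₁ Nnorm₂ 1 (1/2)
    rw [abs_one] at h5
    linarith
  rcases hcd with hc1 | hd1
  · -- first coordinate case: use the swapped norm
    set N' : ℝ × ℝ → ℝ := fun p => N (p.2, p.1) with hN'_def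
    have hswap : ∀ p : ℝ × ℝ, N' p = N (p.2, p.1) := fun p => rfl
    have Ntri' : ∀ u v : ℝ × ℝ, N' (u + v) ≤ N' u + N' v := by
      intro u v
      have : ((u + v).2, (u + v).1) = ((u.2, u.1) : ℝ × ℝ) + (v.2, v.1) := by
        simp [Prod.ext_iff]
      rw [hswap, this]
      exact Ntri _ _
    have Nhom' : ∀ (t : ℝ) (u : ℝ × ℝ), N' (t • u) = |t| * N' u := by
      intro t u
      have : ((t • u).2, (t • u).1) = t • ((u.2, u.1) : ℝ × ℝ) := by
        simp [Prod.ext_iff]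
      rw [hswap, this, Nhom]
    have Nabs' : ∀ s t : ℝ, N' (s, t) = N' (|s|, |t|) := by
      intro s t
      simp only [hswap]
      exact Nabs t s
    have Nsc' : ∀ u v : ℝ × ℝ, N' u = 1 → N' v = 1 → u ≠ v →
        N' ((1 / 2 : ℝ) • (u + v)) < 1 := by
      intro u v hu hv huv
      have hne : ((u.2, u.1) : ℝ × ℝ) ≠ (v.2, v.1) := by
        intro h
        rw [Prod.ext_iff] at h
        exact huv (Prod.ext h.2 h.1)
      have h1 := Nsc (u.2, u.1) (v.2, v.1) hu hv hne
      have h2 : (((1/2 : ℝ) • (u + v)).2, ((1/2 : ℝ) • (u + v)).1)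
          = (1/2 : ℝ) • (((u.2, u.1) : ℝ × ℝ) + (v.2, v.1)) := by
        simp [Prod.ext_iff]
        constructor <;> ring
      rw [hswap, h2]
      exact h1
    have hN' : N' (d, c) = 1 := by rw [hswap]; exact hN
    obtain ⟨ε, hε, W', hW'mem, hW'prop, t, ht, htbound⟩ :=
      key N' Ntri' Nhom' Nabs' Nnorm₂ Nnorm₁ Nsc' d c hd hc hc1 hN'
    set W : Set (ℝ × ℝ) := (fun p : ℝ × ℝ => (p.2, p.1)) ⁻¹' W' with hW_def
    have hWmem : W ∈ nhds (c, d) := by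
      have hcontsw : Continuous (fun p : ℝ × ℝ => (p.2, p.1)) :=
        continuous_snd.prodMk continuous_fst
      exact hcontsw.continuousAt.preimage_mem_nhds hW'mem
    refine ⟨ε, hε, W, hWmem, ?_, Or.inl ⟨t, ht, ?_⟩⟩
    · intro a b ha hb hab hsum
      have h1 : N' (b, a) = 1 := by rw [hswap]; exact hab
      have h2 : N' ((b, a) + (d, c)) = N ((a, b) + (c, d)) := by rw [hswap]; rfl
      exact hW'prop b a hb ha h1 (by rw [h2]; exact hsum)
    · intro p hp
      exact htbound (p.2, p.1) hp
  · obtain ⟨ε, hε, W, hWmem, hWprop, t, ht, htbound⟩ :=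
      key N Ntri Nhom Nabs Nnorm₁ Nnorm₂ Nsc c d hc hd hd1 hN
    exact ⟨ε, hε, W, hWmem, hWprop, Or.inr ⟨t, ht, htbound⟩⟩
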